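/- For each natural number N there exist an incidence structure S = (P, L, I) and a homogeneous realization (p, l) of S such that: (1) distinct points of P have non-parallel coordinate vectors and distinct lines of L have non-parallel coordinate vectors; (2) every geometric incidence is recorded, i.e. for all i ∈ P and j ∈ L, if ⟪p i, l j⟫ = 0 then (i, j) ∈ I; (3) the realization is independent: its only homogeneous self-stress is zero; (4) the realization is infinitesimally rigid: its space of homogeneous infinitesimal flexes has dimension exactly |P| + |L| + 8; and (5) for all integers n, m with 0 ≤ n ≤ 2^N and 0 ≤ m ≤ 2^N, the vector (n, m, 2^N) ∈ ℝ³ either is a nonzero scalar multiple of p i for some i ∈ P, or satisfies ⟪(n, m, 2^N), l j⟫ = 0 for at least two distinct j ∈ L (every dyadic grid point of level N in the unit square is a point of the configuration or an intersection of at least two of its lines). -/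

import Mathlib

open Matrix

/-- The space of homogeneous infinitesimal flexes of a homogeneous realization
`(p, l)` of an incidence structure with incidence set `I`: pairs `(p', l')`
with `⟪p i, l' j⟫ + ⟪p' i, l j⟫ = 0` for every incidence `(i, j) ∈ I`. -/
def homFlexSpace {P L : Type*} (I : Set (P × L))
    (p : P → Fin 3 → ℝ) (l : L → Fin 3 → ℝ) :
    Submodule ℝ ((P → Fin 3 → ℝ) × (L → Fin 3 → ℝ)) where
  carrier := {x | ∀ ij ∈ I, p ij.1 ⬝ᵥ x.2 ij.2 + x.1 ij.1 ⬝ᵥ l ij.2 = 0}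
  add_mem' := by
    intro a b ha hb ij hij
    have h1 := ha ij hij
    have h2 := hb ij hij
    simp only [Prod.fst_add, Prod.snd_add, Pi.add_apply, dotProduct_add,
      add_dotProduct] at *
    linarith
  zero_mem' := by
    intro ij hij
    simp
  smul_mem' := by
    intro c a ha ij hij
    have h1 := ha ij hij
    simp only [Prod.smul_fst, Prod.smul_snd, Pi.smul_apply, dotProduct_smul,
      smul_dotProduct, smul_eq_mul] at *
    linear_combination c * h1

namespace IsoDG

/-- Two vectors that are not scalar multiples of each other in either direction
admit solutions to arbitrary pairs of dot product equations. -/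
theorem exists_dot_eq (a b : Fin 3 → ℝ) (hab : ∀ c : ℝ, a ≠ c • b)
    (hba : ∀ c : ℝ, b ≠ c • a) (s t : ℝ) :
    ∃ z : Fin 3 → ℝ, a ⬝ᵥ z = s ∧ b ⬝ᵥ z = t := by
  have hb0 : b ≠ 0 := by
    intro h; exact hba 0 (by simp [h])
  have hc : a ⨯₃ b ≠ 0 := by
    intro h
    -- derive that a is a multiple of b
    have h0 := congrFun h 0
    have h1 := congrFun h 1
    have h2 := congrFun h 2
    simp [crossProduct] at h0 h1 h2
    have hbj : b 0 ≠ 0 ∨ b 1 ≠ 0 ∨ b 2 ≠ 0 := by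
      by_contra hcon
      push_neg at hcon
      exact hb0 (by funext j; fin_cases j <;> simp [hcon.1, hcon.2.1, hcon.2.2])
    rcases hbj with hj | hj | hj
    · refine hab (a 0 / b 0) ?_
      funext j; fin_cases j <;> simp [Pi.smul_apply, smul_eq_mul] <;> field_simp <;> linarith
    · refine hab (a 1 / b 1) ?_
      funext j; fin_cases j <;> simp [Pi.smul_apply, smul_eq_mul] <;> field_simp <;> linarith
    · refine hab (a 2 / b 2) ?_
      funext j; fin_cases j <;> simp [Pi.smul_apply, smul_eq_mul] <;> field_simp <;> linarith
  set c : Fin 3 → ℝ := a ⨯₃ b with hcdef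
  have hcc : c ⬝ᵥ c ≠ 0 := by
    intro h
    exact hc ((dotProduct_self_eq_zero).mp h)
  refine ⟨(s / (c ⬝ᵥ c)) • (b ⨯₃ c) + (t / (c ⬝ᵥ c)) • (c ⨯₃ a), ?_, ?_⟩
  · have h1 : a ⬝ᵥ (b ⨯₃ c) = c ⬝ᵥ c := by
      rw [triple_product_permutation a b c, triple_product_permutation b c a]
    have h2 : a ⬝ᵥ (c ⨯₃ a) = 0 := by
      rw [triple_product_permutation a c a, cross_self, dotProduct_zero]
    rw [dotProduct_add, dotProduct_smul, dotProduct_smul, h1, h2, smul_eq_mul, smul_eq_mul,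
      mul_zero, add_zero, div_mul_cancel₀ _ hcc]
  · have h1 : b ⬝ᵥ (b ⨯₃ c) = 0 := dot_self_cross b c
    have h2 : b ⬝ᵥ (c ⨯₃ a) = c ⬝ᵥ c := by
      rw [triple_product_permutation b c a, triple_product_permutation c a b]
    rw [dotProduct_add, dotProduct_smul, dotProduct_smul, h1, h2, smul_eq_mul, smul_eq_mul,
      mul_zero, zero_add, div_mul_cancel₀ _ hcc]

/-- The rigidity map of a realization together with an enumeration of incidences. -/
noncomputable def Rmap (np nl e : ℕ) (p : Fin np → Fin 3 → ℝ) (l : Fin nl → Fin 3 → ℝ)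
    (inc : Fin e → Fin np × Fin nl) :
    ((Fin np → Fin 3 → ℝ) × (Fin nl → Fin 3 → ℝ)) →ₗ[ℝ] (Fin e → ℝ) where
  toFun x := fun k => p (inc k).1 ⬝ᵥ x.2 (inc k).2 + x.1 (inc k).1 ⬝ᵥ l (inc k).2
  map_add' x y := by
    funext k
    simp only [Prod.fst_add, Prod.snd_add, Pi.add_apply, dotProduct_add, add_dotProduct]
    ring
  map_smul' c x := by
    funext k
    simp only [Prod.smul_fst, Prod.smul_snd, Pi.smul_apply, dotProduct_smul, smul_dotProduct,
      smul_eq_mul, RingHom.id_apply]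
    ring

structure Good (np nl e : ℕ) (p : Fin np → Fin 3 → ℝ) (l : Fin nl → Fin 3 → ℝ)
    (inc : Fin e → Fin np × Fin nl) : Prop where
  pnz : ∀ i, p i ≠ 0
  lnz : ∀ j, l j ≠ 0
  pnp : ∀ i i', i ≠ i' → ∀ c : ℝ, p i ≠ c • p i'
  lnp : ∀ j j', j ≠ j' → ∀ c : ℝ, l j ≠ c • l j'
  ginc : ∀ k, p (inc k).1 ⬝ᵥ l (inc k).2 = 0
  gcov : ∀ ij : Fin np × Fin nl, p ij.1 ⬝ᵥ l ij.2 = 0 → ij ∈ Set.range inc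
  inj : Function.Injective inc
  count : e + 8 = 2 * (np + nl)
  surj : Function.Surjective (Rmap np nl e p l inc)

theorem Good.linj {np nl e p l inc} (G : Good np nl e p l inc) :
    Function.Injective l := by
  intro j j' h
  by_contra hne
  exact G.lnp j j' hne 1 (by simpa using h)

theorem Good.pinj {np nl e p l inc} (G : Good np nl e p l inc) :
    Function.Injective p := by
  intro j j' h
  by_contra hne
  exact G.pnp j j' hne 1 (by simpa using h)

/-- Duality: swap points and lines. -/
theorem Good.dual {np nl e p l inc} (G : Good np nl e p l inc) :
    Good nl np e l p (fun k => ((inc k).2, (inc k).1)) where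
  pnz := G.lnz
  lnz := G.pnz
  pnp := G.lnp
  lnp := G.pnp
  ginc k := by rw [dotProduct_comm]; exact G.ginc k
  gcov ij h := by
    rcases G.gcov (ij.2, ij.1) (by rwa [dotProduct_comm] at h) with ⟨k, hk⟩
    exact ⟨k, by simp [hk]⟩
  inj k k' h := by
    apply G.inj
    have h1 : (inc k).2 = (inc k').2 := congrArg Prod.fst h
    have h2 : (inc k).1 = (inc k').1 := congrArg Prod.snd h
    exact Prod.ext h2 h1
  count := by have := G.count; omega
  surj := by
    intro y
    obtain ⟨x, hx⟩ := G.surj y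
    refine ⟨(x.2, x.1), ?_⟩
    funext k
    have := congrFun hx k
    simp only [Rmap, LinearMap.coe_mk, AddHom.coe_mk] at this ⊢
    rw [dotProduct_comm, add_comm, dotProduct_comm (x.2 _)]
    exact this

/-- Henneberg move: add a new line through exactly two existing points. -/
theorem Good.addLine {np nl e p l inc} (G : Good np nl e p l inc) (v : Fin 3 → ℝ)
    (i1 i2 : Fin np) (h12 : i1 ≠ i2)
    (hv1 : p i1 ⬝ᵥ v = 0) (hv2 : p i2 ⬝ᵥ v = 0)
    (hex : ∀ i, p i ⬝ᵥ v = 0 → i = i1 ∨ i = i2)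
    (hnpar : ∀ j (c : ℝ), v ≠ c • l j) (hv0 : v ≠ 0) :
    ∃ inc', Good np (nl + 1) (e + 2) p (Fin.snoc l v) inc' := by
  classical
  set l' : Fin (nl + 1) → Fin 3 → ℝ := Fin.snoc l v with hl'
  set inc' : Fin (e + 2) → Fin np × Fin (nl + 1) :=
    Fin.append (fun k => ((inc k).1, (inc k).2.castSucc))
      ![(i1, Fin.last nl), (i2, Fin.last nl)] with hinc'
  have happL : ∀ k : Fin e, inc' (Fin.castAdd 2 k) = ((inc k).1, (inc k).2.castSucc) := by
    intro k; simp [hinc', Fin.append_left]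
  have happR : ∀ k : Fin 2, inc' (Fin.natAdd e k) =
      (![(i1, Fin.last nl), (i2, Fin.last nl)] : Fin 2 → _) k := by
    intro k; simp [hinc', Fin.append_right]
  have hlcast : ∀ j : Fin nl, l' j.castSucc = l j := fun j => by simp [hl']
  have hllast : l' (Fin.last nl) = v := by simp [hl']
  refine ⟨inc', ?_⟩
  constructor
  · exact G.pnz
  · intro j
    refine Fin.lastCases ?_ ?_ j
    · rwa [hllast]
    · intro j'; rw [hlcast]; exact G.lnz j'
  · exact G.pnp
  · intro j j'
    refine Fin.lastCases ?_ (fun ja => ?_) j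
    · refine Fin.lastCases ?_ (fun jb => ?_) j'
      · intro hne; exact absurd rfl hne
      · intro _ c; rw [hllast, hlcast]; exact hnpar jb c
    · refine Fin.lastCases ?_ (fun jb => ?_) j'
      · intro _ c
        rw [hllast, hlcast]
        intro h
        rcases eq_or_ne c 0 with rfl | hc
        · exact G.lnz ja (by simpa using h)
        · exact hnpar ja c⁻¹ (by rw [h, smul_smul, inv_mul_cancel₀ hc, one_smul])
      · intro hne c
        rw [hlcast, hlcast]
        exact G.lnp ja jb (fun hh => hne (by rw [hh])) c
  · intro k
    refine Fin.addCases ?_ ?_ k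
    · intro k'; rw [happL]; simpa [hlcast] using G.ginc k'
    · intro k'
      rw [happR]
      fin_cases k'
      · show p i1 ⬝ᵥ l' (Fin.last nl) = 0
        rw [hllast]; exact hv1
      · show p i2 ⬝ᵥ l' (Fin.last nl) = 0
        rw [hllast]; exact hv2
  · rintro ⟨i, j⟩
    refine Fin.lastCases ?_ ?_ j
    · intro h
      rcases hex i (by rwa [hllast] at h) with rfl | rfl
      · exact ⟨Fin.natAdd e 0, by rw [happR]; rfl⟩
      · exact ⟨Fin.natAdd e 1, by rw [happR]; rfl⟩
    · intro ja h
      rw [hlcast] at h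
      rcases G.gcov (i, ja) h with ⟨k, hk⟩
      exact ⟨Fin.castAdd 2 k, by rw [happL, hk]⟩
  · intro k k'
    refine Fin.addCases (fun ka => ?_) (fun ka => ?_) k <;>
      refine Fin.addCases (fun kb => ?_) (fun kb => ?_) k' <;> intro hkk
    · rw [happL ka, happL kb] at hkk
      obtain ⟨h1, h2⟩ := Prod.mk.inj hkk
      have hk : ka = kb := G.inj (Prod.ext h1 (Fin.castSucc_injective _ h2))
      rw [hk]
    · exfalso
      rw [happL ka, happR kb] at hkk
      have h2 := congrArg Prod.snd hkk
      fin_cases kb <;>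
        exact (Fin.castSucc_lt_last (inc ka).2).ne (by simpa using h2)
    · exfalso
      rw [happR ka, happL kb] at hkk
      have h2 := congrArg Prod.snd hkk
      fin_cases ka <;>
        exact (Fin.castSucc_lt_last (inc kb).2).ne.symm (by simpa using h2)
    · rw [happR ka, happR kb] at hkk
      fin_cases ka <;> fin_cases kb <;>
        first
          | rfl
          | (exfalso; exact h12 (by simpa using congrArg Prod.fst hkk))
          | (exfalso; exact h12 (by simpa using (congrArg Prod.fst hkk).symm))
  · have := G.count; omega
  · intro y
    obtain ⟨x0, hx0⟩ := G.surj (fun k => y (Fin.castAdd 2 k))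
    obtain ⟨z, hz1, hz2⟩ := exists_dot_eq (p i1) (p i2)
      (G.pnp i1 i2 h12) (G.pnp i2 i1 (Ne.symm h12))
      (y (Fin.natAdd e 0) - x0.1 i1 ⬝ᵥ v) (y (Fin.natAdd e 1) - x0.1 i2 ⬝ᵥ v)
    refine ⟨(x0.1, Fin.snoc x0.2 z), ?_⟩
    funext k
    refine Fin.addCases ?_ ?_ k
    · intro ka
      have hh := congrFun hx0 ka
      simp only [Rmap, LinearMap.coe_mk, AddHom.coe_mk] at hh ⊢
      rw [happL]
      simpa [hlcast, Fin.snoc_castSucc] using hh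
    · intro kb
      simp only [Rmap, LinearMap.coe_mk, AddHom.coe_mk]
      rw [happR]
      fin_cases kb
      · show p i1 ⬝ᵥ (Fin.snoc x0.2 z : Fin (nl+1) → Fin 3 → ℝ) (Fin.last nl) +
            x0.1 i1 ⬝ᵥ l' (Fin.last nl) = y (Fin.natAdd e 0)
        rw [Fin.snoc_last, hllast, hz1]; ring
      · show p i2 ⬝ᵥ (Fin.snoc x0.2 z : Fin (nl+1) → Fin 3 → ℝ) (Fin.last nl) +
            x0.1 i2 ⬝ᵥ l' (Fin.last nl) = y (Fin.natAdd e 1)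
        rw [Fin.snoc_last, hllast, hz2]; ring

/-- Henneberg move: add a new point on exactly two existing lines. -/
theorem Good.addPoint {np nl e p l inc} (G : Good np nl e p l inc) (w : Fin 3 → ℝ)
    (j1 j2 : Fin nl) (h12 : j1 ≠ j2)
    (hw1 : w ⬝ᵥ l j1 = 0) (hw2 : w ⬝ᵥ l j2 = 0)
    (hex : ∀ j, w ⬝ᵥ l j = 0 → j = j1 ∨ j = j2)
    (hnpar : ∀ i (c : ℝ), w ≠ c • p i) (hw0 : w ≠ 0) :
    ∃ inc', Good (np + 1) nl (e + 2) (Fin.snoc p w) l inc' := by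
  obtain ⟨inc2, G2⟩ := G.dual.addLine w j1 j2 h12
    (by rwa [dotProduct_comm]) (by rwa [dotProduct_comm])
    (fun j hj => hex j (by rwa [dotProduct_comm] at hj)) hnpar hw0
  exact ⟨_, G2.dual⟩

/-- The base configuration: any 4 pairwise non-parallel nonzero points, no lines. -/
theorem Good.base (p : Fin 4 → Fin 3 → ℝ)
    (hnz : ∀ i, p i ≠ 0)
    (hnp : ∀ i i', i ≠ i' → ∀ c : ℝ, p i ≠ c • p i') :
    Good 4 0 0 p Fin.elim0 Fin.elim0 where
  pnz := hnz
  lnz := fun j => j.elim0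
  pnp := hnp
  lnp := fun j => j.elim0
  ginc := fun k => k.elim0
  gcov := fun ij => ij.2.elim0
  inj := fun k => k.elim0
  count := by norm_num
  surj := by
    intro y
    exact ⟨0, funext fun k => k.elim0⟩

theorem Good.flex_eq_ker {np nl e p l inc} (G : Good np nl e p l inc) :
    homFlexSpace {ij : Fin np × Fin nl | p ij.1 ⬝ᵥ l ij.2 = 0} p l
      = LinearMap.ker (Rmap np nl e p l inc) := by
  ext x
  constructor
  · intro hx
    have hx' : ∀ ij ∈ {ij : Fin np × Fin nl | p ij.1 ⬝ᵥ l ij.2 = 0},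
        p ij.1 ⬝ᵥ x.2 ij.2 + x.1 ij.1 ⬝ᵥ l ij.2 = 0 := hx
    rw [LinearMap.mem_ker]
    funext k
    have := hx' (inc k) (G.ginc k)
    simpa [Rmap] using this
  · intro hx
    intro ij hij
    rcases G.gcov ij hij with ⟨k, rfl⟩
    have := congrFun (LinearMap.mem_ker.mp hx) k
    simpa [Rmap] using this

theorem Good.flex_finrank {np nl e p l inc} (G : Good np nl e p l inc) :
    Module.finrank ℝ
      (homFlexSpace {ij : Fin np × Fin nl | p ij.1 ⬝ᵥ l ij.2 = 0} p l) = np + nl + 8 := by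
  have hker := G.flex_eq_ker
  have hrank := LinearMap.finrank_range_add_finrank_ker (Rmap np nl e p l inc)
  have hr : Module.finrank ℝ (LinearMap.range (Rmap np nl e p l inc)) = e := by
    rw [LinearMap.range_eq_top.mpr G.surj, finrank_top, Module.finrank_fintype_fun_eq_card,
      Fintype.card_fin]
  have hfun : ∀ n : ℕ, Module.finrank ℝ (Fin n → Fin 3 → ℝ) = n * 3 := by
    intro n
    rw [Module.finrank_pi_fintype ℝ]
    simp [Module.finrank_pi]
  have hd : Module.finrank ℝ ((Fin np → Fin 3 → ℝ) × (Fin nl → Fin 3 → ℝ))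
      = np * 3 + nl * 3 := by
    rw [Module.finrank_prod, hfun, hfun]
  rw [hker]
  have := G.count
  rw [hr, hd] at hrank
  omega

theorem Good.stress_zero {np nl e p l inc} (G : Good np nl e p l inc)
    (ω : Fin np × Fin nl → ℝ)
    (hsupp : ∀ ij : Fin np × Fin nl, p ij.1 ⬝ᵥ l ij.2 ≠ 0 → ω ij = 0)
    (hP : ∀ j, ∑ i, ω (i, j) • p i = 0) (hL : ∀ i, ∑ j, ω (i, j) • l j = 0) :
    ω = 0 := by
  classical
  have keyP : ∀ (y : Fin nl → Fin 3 → ℝ) (j : Fin nl),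
      ∑ i, ω (i, j) * (p i ⬝ᵥ y j) = 0 := by
    intro y j
    have h : (∑ i, ω (i, j) • p i) ⬝ᵥ y j = 0 := by rw [hP j, zero_dotProduct]
    rw [← h]
    simp only [dotProduct, Finset.sum_apply, Pi.smul_apply, smul_eq_mul,
      Finset.sum_mul, Finset.mul_sum]
    rw [Finset.sum_comm]
    exact Finset.sum_congr rfl fun i _ => Finset.sum_congr rfl fun t _ => by ring
  have keyL : ∀ (y : Fin np → Fin 3 → ℝ) (i : Fin np),
      ∑ j, ω (i, j) * (y i ⬝ᵥ l j) = 0 := by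
    intro y i
    have h : y i ⬝ᵥ (∑ j, ω (i, j) • l j) = 0 := by rw [hL i, dotProduct_zero]
    rw [← h]
    simp only [dotProduct, Finset.sum_apply, Pi.smul_apply, smul_eq_mul,
      Finset.sum_mul, Finset.mul_sum]
    rw [Finset.sum_comm]
    exact Finset.sum_congr rfl fun j _ => Finset.sum_congr rfl fun t _ => by ring
  have hsum : ∀ x : (Fin np → Fin 3 → ℝ) × (Fin nl → Fin 3 → ℝ),
      ∑ k, ω (inc k) * (Rmap np nl e p l inc x k) = 0 := by
    intro x
    have step1 : ∑ k, ω (inc k) *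
        (p (inc k).1 ⬝ᵥ x.2 (inc k).2 + x.1 (inc k).1 ⬝ᵥ l (inc k).2)
        = ∑ ij ∈ Finset.univ.image inc,
            ω ij * (p ij.1 ⬝ᵥ x.2 ij.2 + x.1 ij.1 ⬝ᵥ l ij.2) := by
      rw [Finset.sum_image (fun a _ b _ h => G.inj h)]
    have step2 : ∑ ij ∈ Finset.univ.image inc,
          ω ij * (p ij.1 ⬝ᵥ x.2 ij.2 + x.1 ij.1 ⬝ᵥ l ij.2)
        = ∑ ij : Fin np × Fin nl,
            ω ij * (p ij.1 ⬝ᵥ x.2 ij.2 + x.1 ij.1 ⬝ᵥ l ij.2) := by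
      refine Finset.sum_subset (Finset.subset_univ _) ?_
      intro ij _ hni
      have hnr : ij ∉ Set.range inc := by
        intro ⟨k, hk⟩
        exact hni (Finset.mem_image.mpr ⟨k, Finset.mem_univ k, hk⟩)
      have : p ij.1 ⬝ᵥ l ij.2 ≠ 0 := fun h => hnr (G.gcov ij h)
      rw [hsupp ij this, zero_mul]
    have step3 : ∑ ij : Fin np × Fin nl,
          ω ij * (p ij.1 ⬝ᵥ x.2 ij.2 + x.1 ij.1 ⬝ᵥ l ij.2) = 0 := by
      rw [Fintype.sum_prod_type]
      simp only [mul_add, Finset.sum_add_distrib]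
      have h1 : ∑ i, ∑ j, ω (i, j) * (p i ⬝ᵥ x.2 j) = 0 := by
        rw [Finset.sum_comm]
        exact Finset.sum_eq_zero fun j _ => keyP x.2 j
      have h2 : ∑ i, ∑ j, ω (i, j) * (x.1 i ⬝ᵥ l j) = 0 :=
        Finset.sum_eq_zero fun i _ => keyL x.1 i
      rw [h1, h2, add_zero]
    show ∑ k, ω (inc k) * (p (inc k).1 ⬝ᵥ x.2 (inc k).2 + x.1 (inc k).1 ⬝ᵥ l (inc k).2) = 0
    rw [step1, step2, step3]
  funext ij
  show ω ij = 0
  by_cases h : p ij.1 ⬝ᵥ l ij.2 = 0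
  · rcases G.gcov ij h with ⟨k, rfl⟩
    obtain ⟨x, hx⟩ := G.surj (Pi.single k 1)
    have h0 := hsum x
    rw [hx] at h0
    have : ∑ k', ω (inc k') * (Pi.single k 1 : Fin e → ℝ) k' = ω (inc k) := by
      rw [Finset.sum_eq_single k]
      · rw [Pi.single_eq_same, mul_one]
      · intro k' _ hk'
        rw [Pi.single_eq_of_ne hk', mul_zero]
      · intro hk; exact absurd (Finset.mem_univ k) hk
    rw [this] at h0
    exact h0
  · exact hsupp ij h

/-! ### The concrete configuration -/

section Construction

noncomputable def E1 : Fin 3 → ℝ := ![1, 1, 0]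
noncomputable def Em1 : Fin 3 → ℝ := ![1, -1, 0]
noncomputable def Pv (N : ℕ) (i d : ℤ) : Fin 3 → ℝ := ![(i:ℝ), 2^(N+2) + (d:ℝ), 2^N]
noncomputable def Yv : Fin 3 → ℝ := ![0, 1, -4]
noncomputable def Vv (N : ℕ) (i : ℤ) : Fin 3 → ℝ := ![(2:ℝ)^N, 0, -(i:ℝ)]
noncomputable def Spv (N : ℕ) (i : ℤ) : Fin 3 → ℝ := ![(2:ℝ)^N, -(2:ℝ)^N, 2^(N+2) - (i:ℝ)]
noncomputable def Smv (N : ℕ) (i : ℤ) : Fin 3 → ℝ := ![(2:ℝ)^N, (2:ℝ)^N, -((2:ℝ)^(N+2)) - (i:ℝ)]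

variable {N : ℕ}

lemma q_pos (N : ℕ) : (0:ℝ) < 2^N := by positivity
lemma q_ne (N : ℕ) : ((2:ℝ)^N) ≠ 0 := (q_pos N).ne'

lemma dPY (i d : ℤ) : Pv N i d ⬝ᵥ Yv = d := by
  simp [Pv, Yv, dotProduct, Fin.sum_univ_three]; ring
lemma dPV (i d i' : ℤ) : Pv N i d ⬝ᵥ Vv N i' = 2^N * ((i:ℝ) - i') := by
  simp [Pv, Vv, dotProduct, Fin.sum_univ_three]; ring
lemma dPSp (i d i' : ℤ) : Pv N i d ⬝ᵥ Spv N i' = 2^N * ((i:ℝ) - d - i') := by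
  simp [Pv, Spv, dotProduct, Fin.sum_univ_three]; ring
lemma dPSm (i d i' : ℤ) : Pv N i d ⬝ᵥ Smv N i' = 2^N * ((i:ℝ) + d - i') := by
  simp [Pv, Smv, dotProduct, Fin.sum_univ_three]; ring
lemma dE1Y : E1 ⬝ᵥ Yv = 1 := by
  simp [E1, Yv, dotProduct, Fin.sum_univ_three]
lemma dE1V (i : ℤ) : E1 ⬝ᵥ Vv N i = 2^N := by
  simp [E1, Vv, dotProduct, Fin.sum_univ_three]
lemma dE1Sp (i : ℤ) : E1 ⬝ᵥ Spv N i = 0 := by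
  simp [E1, Spv, dotProduct, Fin.sum_univ_three]
lemma dE1Sm (i : ℤ) : E1 ⬝ᵥ Smv N i = 2^N + 2^N := by
  simp [E1, Smv, dotProduct, Fin.sum_univ_three]
lemma dEm1Y : Em1 ⬝ᵥ Yv = -1 := by
  simp [Em1, Yv, dotProduct, Fin.sum_univ_three]
lemma dEm1V (i : ℤ) : Em1 ⬝ᵥ Vv N i = 2^N := by
  simp [Em1, Vv, dotProduct, Fin.sum_univ_three]
lemma dEm1Sp (i : ℤ) : Em1 ⬝ᵥ Spv N i = 2^N + 2^N := by
  simp [Em1, Spv, dotProduct, Fin.sum_univ_three]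
lemma dEm1Sm (i : ℤ) : Em1 ⬝ᵥ Smv N i = 0 := by
  simp [Em1, Smv, dotProduct, Fin.sum_univ_three]

lemma nzP (i d : ℤ) : Pv N i d ≠ 0 := fun h => q_ne N (congrFun h 2)
lemma nzE1 : E1 ≠ (0 : Fin 3 → ℝ) := fun h => one_ne_zero (congrFun h 0 : (1:ℝ) = 0)
lemma nzEm1 : Em1 ≠ (0 : Fin 3 → ℝ) := fun h => one_ne_zero (congrFun h 0 : (1:ℝ) = 0)
lemma nzY : Yv ≠ (0 : Fin 3 → ℝ) := fun h => one_ne_zero (congrFun h 1 : (1:ℝ) = 0)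
lemma nzV (i : ℤ) : Vv N i ≠ 0 := fun h => q_ne N (congrFun h 0)
lemma nzSp (i : ℤ) : Spv N i ≠ 0 := fun h => q_ne N (congrFun h 0)
lemma nzSm (i : ℤ) : Smv N i ≠ 0 := fun h => q_ne N (congrFun h 0)

lemma smul_comp (c : ℝ) (w : Fin 3 → ℝ) (k : Fin 3) : (c • w) k = c * w k := rfl

lemma c_eq_one {N : ℕ} {c : ℝ} (h : (2:ℝ)^N = c * 2^N) : c = 1 :=
  mul_right_cancel₀ (q_ne N) (show c * 2^N = 1 * 2^N by linarith)

lemma c_eq_zero {N : ℕ} {c : ℝ} (h : c * (2:ℝ)^N = 0) : c = 0 :=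
  (mul_eq_zero.mp h).resolve_right (q_ne N)

-- point nonparallel lemmas
lemma np_P_P {N : ℕ} {i d i' d' : ℤ} (h : i ≠ i' ∨ d ≠ d') (c : ℝ) :
    Pv N i d ≠ c • Pv N i' d' := by
  intro hh
  have h0 : (i:ℝ) = c * (i':ℝ) := congrFun hh 0
  have h1 : (2:ℝ)^(N+2) + (d:ℝ) = c * ((2:ℝ)^(N+2) + (d':ℝ)) := congrFun hh 1
  have h2 : (2:ℝ)^N = c * (2:ℝ)^N := congrFun hh 2
  have hc := c_eq_one h2
  subst hc
  rw [one_mul] at h0 h1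
  rcases h with h | h
  · exact h (by exact_mod_cast h0)
  · have : (d:ℝ) = d' := by linarith
    exact h (by exact_mod_cast this)
lemma np_P_E1 {N : ℕ} (i d : ℤ) (c : ℝ) : Pv N i d ≠ c • E1 := by
  intro hh
  have h2 : (2:ℝ)^N = c * 0 := congrFun hh 2
  rw [mul_zero] at h2
  exact q_ne N h2
lemma np_P_Em1 {N : ℕ} (i d : ℤ) (c : ℝ) : Pv N i d ≠ c • Em1 := by
  intro hh
  have h2 : (2:ℝ)^N = c * 0 := congrFun hh 2
  rw [mul_zero] at h2
  exact q_ne N h2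
lemma np_E1_P {N : ℕ} (i d : ℤ) (c : ℝ) : E1 ≠ c • Pv N i d := by
  intro hh
  have h2 : (0:ℝ) = c * (2:ℝ)^N := congrFun hh 2
  have h0 : (1:ℝ) = c * (i:ℝ) := congrFun hh 0
  have hc := c_eq_zero h2.symm
  rw [hc, zero_mul] at h0
  exact one_ne_zero h0
lemma np_Em1_P {N : ℕ} (i d : ℤ) (c : ℝ) : Em1 ≠ c • Pv N i d := by
  intro hh
  have h2 : (0:ℝ) = c * (2:ℝ)^N := congrFun hh 2
  have h0 : (1:ℝ) = c * (i:ℝ) := congrFun hh 0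
  have hc := c_eq_zero h2.symm
  rw [hc, zero_mul] at h0
  exact one_ne_zero h0
lemma np_E1_Em1 (c : ℝ) : E1 ≠ c • Em1 := by
  intro hh
  have h0 : (1:ℝ) = c * 1 := congrFun hh 0
  have h1 : (1:ℝ) = c * (-1) := congrFun hh 1
  linarith
lemma np_Em1_E1 (c : ℝ) : Em1 ≠ c • E1 := by
  intro hh
  have h0 : (1:ℝ) = c * 1 := congrFun hh 0
  have h1 : (-1:ℝ) = c * 1 := congrFun hh 1
  linarith

-- line nonparallel lemmas
lemma np_V_Y {N : ℕ} (i : ℤ) (c : ℝ) : Vv N i ≠ c • Yv := by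
  intro hh
  have h0 : (2:ℝ)^N = c * 0 := congrFun hh 0
  rw [mul_zero] at h0
  exact q_ne N h0
lemma np_V_V {N : ℕ} {i i' : ℤ} (h : i ≠ i') (c : ℝ) : Vv N i ≠ c • Vv N i' := by
  intro hh
  have h0 : (2:ℝ)^N = c * (2:ℝ)^N := congrFun hh 0
  have h2 : -(i:ℝ) = c * (-(i':ℝ)) := congrFun hh 2
  have hc := c_eq_one h0
  subst hc
  rw [one_mul] at h2
  exact h (by exact_mod_cast neg_injective h2)
lemma np_V_Sp {N : ℕ} (i i' : ℤ) (c : ℝ) : Vv N i ≠ c • Spv N i' := by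
  intro hh
  have h0 : (2:ℝ)^N = c * (2:ℝ)^N := congrFun hh 0
  have h1 : (0:ℝ) = c * (-(2:ℝ)^N) := congrFun hh 1
  have hc := c_eq_one h0
  subst hc
  rw [one_mul] at h1
  exact q_ne N (neg_eq_zero.mp h1.symm)
lemma np_V_Sm {N : ℕ} (i i' : ℤ) (c : ℝ) : Vv N i ≠ c • Smv N i' := by
  intro hh
  have h0 : (2:ℝ)^N = c * (2:ℝ)^N := congrFun hh 0
  have h1 : (0:ℝ) = c * ((2:ℝ)^N) := congrFun hh 1
  have hc := c_eq_one h0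
  subst hc
  rw [one_mul] at h1
  exact q_ne N h1.symm
lemma np_Sp_Y {N : ℕ} (i : ℤ) (c : ℝ) : Spv N i ≠ c • Yv := by
  intro hh
  have h0 : (2:ℝ)^N = c * 0 := congrFun hh 0
  rw [mul_zero] at h0
  exact q_ne N h0
lemma np_Sp_V {N : ℕ} (i i' : ℤ) (c : ℝ) : Spv N i ≠ c • Vv N i' := by
  intro hh
  have h0 : (2:ℝ)^N = c * (2:ℝ)^N := congrFun hh 0
  have h1 : (-(2:ℝ)^N) = c * 0 := congrFun hh 1
  have hc := c_eq_one h0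
  subst hc
  rw [mul_zero] at h1
  exact q_ne N (neg_eq_zero.mp h1)
lemma np_Sp_Sp {N : ℕ} {i i' : ℤ} (h : i ≠ i') (c : ℝ) : Spv N i ≠ c • Spv N i' := by
  intro hh
  have h0 : (2:ℝ)^N = c * (2:ℝ)^N := congrFun hh 0
  have h2 : (2:ℝ)^(N+2) - (i:ℝ) = c * ((2:ℝ)^(N+2) - (i':ℝ)) := congrFun hh 2
  have hc := c_eq_one h0
  subst hc
  rw [one_mul] at h2
  have : (i:ℝ) = i' := by linarith
  exact h (by exact_mod_cast this)
lemma np_Sp_Sm {N : ℕ} (i i' : ℤ) (c : ℝ) : Spv N i ≠ c • Smv N i' := by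
  intro hh
  have h0 : (2:ℝ)^N = c * (2:ℝ)^N := congrFun hh 0
  have h1 : (-(2:ℝ)^N) = c * ((2:ℝ)^N) := congrFun hh 1
  have hc := c_eq_one h0
  subst hc
  rw [one_mul] at h1
  nlinarith [q_pos N]
lemma np_Sm_Y {N : ℕ} (i : ℤ) (c : ℝ) : Smv N i ≠ c • Yv := by
  intro hh
  have h0 : (2:ℝ)^N = c * 0 := congrFun hh 0
  rw [mul_zero] at h0
  exact q_ne N h0
lemma np_Sm_V {N : ℕ} (i i' : ℤ) (c : ℝ) : Smv N i ≠ c • Vv N i' := by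
  intro hh
  have h0 : (2:ℝ)^N = c * (2:ℝ)^N := congrFun hh 0
  have h1 : ((2:ℝ)^N) = c * 0 := congrFun hh 1
  have hc := c_eq_one h0
  subst hc
  rw [mul_zero] at h1
  exact q_ne N h1
lemma np_Sm_Sp {N : ℕ} (i i' : ℤ) (c : ℝ) : Smv N i ≠ c • Spv N i' := by
  intro hh
  have h0 : (2:ℝ)^N = c * (2:ℝ)^N := congrFun hh 0
  have h1 : ((2:ℝ)^N) = c * (-(2:ℝ)^N) := congrFun hh 1
  have hc := c_eq_one h0
  subst hc
  rw [one_mul] at h1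
  nlinarith [q_pos N]
lemma np_Sm_Sm {N : ℕ} {i i' : ℤ} (h : i ≠ i') (c : ℝ) : Smv N i ≠ c • Smv N i' := by
  intro hh
  have h0 : (2:ℝ)^N = c * (2:ℝ)^N := congrFun hh 0
  have h2 : -((2:ℝ)^(N+2)) - (i:ℝ) = c * (-((2:ℝ)^(N+2)) - (i':ℝ)) := congrFun hh 2
  have hc := c_eq_one h0
  subst hc
  rw [one_mul] at h2
  have : (i:ℝ) = i' := by linarith
  exact h (by exact_mod_cast this)
lemma np_Y_V {N : ℕ} (i : ℤ) (c : ℝ) : Yv ≠ c • Vv N i := by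
  intro hh
  have h0 : (0:ℝ) = c * (2:ℝ)^N := congrFun hh 0
  have h1 : (1:ℝ) = c * 0 := congrFun hh 1
  have hc := c_eq_zero h0.symm
  rw [mul_zero] at h1
  exact one_ne_zero h1
lemma np_Y_Sp {N : ℕ} (i : ℤ) (c : ℝ) : Yv ≠ c • Spv N i := by
  intro hh
  have h0 : (0:ℝ) = c * (2:ℝ)^N := congrFun hh 0
  have h1 : (1:ℝ) = c * (-(2:ℝ)^N) := congrFun hh 1
  have hc := c_eq_zero h0.symm
  rw [hc, zero_mul] at h1
  exact one_ne_zero h1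
lemma np_Y_Sm {N : ℕ} (i : ℤ) (c : ℝ) : Yv ≠ c • Smv N i := by
  intro hh
  have h0 : (0:ℝ) = c * (2:ℝ)^N := congrFun hh 0
  have h1 : (1:ℝ) = c * ((2:ℝ)^N) := congrFun hh 1
  have hc := c_eq_zero h0.symm
  rw [hc, zero_mul] at h1
  exact one_ne_zero h1


/-! ### Invariant -/

def inE (N : ℕ) (S : Finset ℤ) (i : ℤ) : Prop := i ∈ S ∨ i = 2^(N+3) ∨ i = -2^(N+3)

def PtsChar (N : ℕ) (S : Finset ℤ) {np : ℕ} (p : Fin np → Fin 3 → ℝ) : Prop :=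
  ∀ idx, p idx = E1 ∨ p idx = Em1 ∨
    ∃ i d : ℤ, p idx = Pv N i d ∧
      ((d = 0 ∧ inE N S i) ∨ (d ≠ 0 ∧ i ∈ S ∧ inE N S (i - d) ∧ inE N S (i + d)))

def LnsChar (N : ℕ) (S : Finset ℤ) {nl : ℕ} (l : Fin nl → Fin 3 → ℝ) : Prop :=
  ∀ jdx, l jdx = Yv ∨ (∃ i, i ∈ S ∧ l jdx = Vv N i) ∨
    (∃ i, inE N S i ∧ l jdx = Spv N i) ∨ (∃ i, inE N S i ∧ l jdx = Smv N i)

def PtsCompl {np : ℕ} (p : Fin np → Fin 3 → ℝ) : Prop :=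
  (∃ idx, p idx = E1) ∧ (∃ idx, p idx = Em1)

def LnsCompl (N : ℕ) (S : Finset ℤ) {nl : ℕ} (l : Fin nl → Fin 3 → ℝ) : Prop :=
  (∃ j, l j = Yv) ∧
    ∀ i : ℤ, inE N S i → (∃ j, l j = Spv N i) ∧ (∃ j, l j = Smv N i)

def InvS (N : ℕ) (S : Finset ℤ) : Prop :=
  ∃ (np nl e : ℕ) (p : Fin np → Fin 3 → ℝ) (l : Fin nl → Fin 3 → ℝ)
    (inc : Fin e → Fin np × Fin nl),
    Good np nl e p l inc ∧ PtsChar N S p ∧ LnsChar N S l ∧ PtsCompl p ∧ LnsCompl N S l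

lemma inE_mono {N : ℕ} {S S' : Finset ℤ} (h : S ⊆ S') {i : ℤ} (hi : inE N S i) :
    inE N S' i := by
  rcases hi with h' | h' | h'
  · exact Or.inl (h h')
  · exact Or.inr (Or.inl h')
  · exact Or.inr (Or.inr h')

lemma int2_eq {N : ℕ} {a b : ℤ} (h : (2:ℝ)^N * ((a:ℝ) - b) = 0) : a = b := by
  have h2 := (mul_eq_zero.mp h).resolve_left (q_ne N)
  have : (a:ℝ) = b := by linarith
  exact_mod_cast this

lemma int3_eq {N : ℕ} {i d i' : ℤ} (h : (2:ℝ)^N * ((i:ℝ) - d - i') = 0) : i - d = i' := by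
  have h2 := (mul_eq_zero.mp h).resolve_left (q_ne N)
  have : ((i - d : ℤ):ℝ) = i' := by push_cast; linarith
  exact_mod_cast this

lemma int3_eq' {N : ℕ} {i d i' : ℤ} (h : (2:ℝ)^N * ((i:ℝ) + d - i') = 0) : i + d = i' := by
  have h2 := (mul_eq_zero.mp h).resolve_left (q_ne N)
  have : ((i + d : ℤ):ℝ) = i' := by push_cast; linarith
  exact_mod_cast this

lemma q_mul_ne {N : ℕ} {a b : ℤ} (h : a ≠ b) : (2:ℝ)^N * ((a:ℝ) - b) ≠ 0 :=
  fun hh => h (int2_eq hh)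

lemma twoN_ne_zero' (N : ℕ) : (2:ℝ)^N + 2^N ≠ 0 := by positivity

theorem InvS.node {N : ℕ} {S : Finset ℤ} (h : InvS N S) (i0 d0 : ℤ) (hd0 : d0 ≠ 0)
    (hiS : i0 ∉ S) (hiB : i0 ≠ 2^(N+3)) (hiB' : i0 ≠ -2^(N+3))
    (hm : inE N S (i0 - d0)) (hp : inE N S (i0 + d0)) :
    InvS N (insert i0 S) := by
  classical
  obtain ⟨np, nl, e, p, l, inc, G, hPC, hLC, hPCo, hLCo⟩ := h
  have hiE : ¬ inE N S i0 := by
    rintro (h' | h' | h') <;> [exact hiS h'; exact hiB h'; exact hiB' h']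
  obtain ⟨⟨jY, hjY⟩, hSS⟩ := hLCo
  obtain ⟨jpm, hjpm⟩ := (hSS (i0 - d0) hm).1
  obtain ⟨jmm, hjmm⟩ := (hSS (i0 - d0) hm).2
  obtain ⟨jpp, hjpp⟩ := (hSS (i0 + d0) hp).1
  obtain ⟨jmp, hjmp⟩ := (hSS (i0 + d0) hp).2
  obtain ⟨⟨iE1, hiE1⟩, ⟨iEm1, hiEm1⟩⟩ := hPCo
  -- membership facts about an old P-point (i, d)
  have hPfact : ∀ (i d : ℤ),
      ((d = 0 ∧ inE N S i) ∨ (d ≠ 0 ∧ i ∈ S ∧ inE N S (i - d) ∧ inE N S (i + d))) →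
      i ≠ i0 ∧ i - d ≠ i0 ∧ i + d ≠ i0 := by
    rintro i d (⟨rfl, hin⟩ | ⟨hdne, hin, hin1, hin2⟩)
    · refine ⟨fun hh => hiE (hh ▸ hin), fun hh => ?_, fun hh => ?_⟩
      · rw [sub_zero] at hh; exact hiE (hh ▸ hin)
      · rw [add_zero] at hh; exact hiE (hh ▸ hin)
    · exact ⟨fun hh => hiS (hh ▸ hin), fun hh => hiE (hh ▸ hin1), fun hh => hiE (hh ▸ hin2)⟩
  -- ===== Move 1 : add the point W⁺ = Pv i0 d0 =====
  have hne_jpm_jmp : jpm ≠ jmp := by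
    intro hh
    exact np_Sp_Sm (i0 - d0) (i0 + d0) 1
      (by rw [one_smul, ← hjpm, ← hjmp, hh])
  obtain ⟨inc1, G1⟩ := G.addPoint (Pv N i0 d0) jpm jmp hne_jpm_jmp
    (by rw [hjpm, dPSp]; push_cast; ring)
    (by rw [hjmp, dPSm]; push_cast; ring)
    (by
      intro j hj
      rcases hLC j with hY | ⟨i'', hi'', hV⟩ | ⟨i'', hi'', hV⟩ | ⟨i'', hi'', hV⟩
      · rw [hY, dPY] at hj
        exact absurd (by exact_mod_cast hj) hd0
      · rw [hV, dPV] at hj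
        exact absurd (int2_eq hj ▸ hi'') hiS
      · rw [hV, dPSp] at hj
        have : i0 - d0 = i'' := int3_eq hj
        exact Or.inl (G.linj (by rw [hV, ← this, hjpm]))
      · rw [hV, dPSm] at hj
        have : i0 + d0 = i'' := int3_eq' hj
        exact Or.inr (G.linj (by rw [hV, ← this, hjmp])))
    (by
      intro idx c
      rcases hPC idx with hP | hP | ⟨i, d, hP, hdc⟩
      · rw [hP]; exact np_P_E1 i0 d0 c
      · rw [hP]; exact np_P_Em1 i0 d0 c
      · rw [hP]; exact np_P_P (Or.inl (fun hh => (hPfact i d hdc).1 hh.symm)) c)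
    (nzP i0 d0)
  set p1 : Fin (np + 1) → Fin 3 → ℝ := Fin.snoc p (Pv N i0 d0) with hp1
  -- ===== Move 2 : add the point W⁻ = Pv i0 (-d0) =====
  have hne_jmm_jpp : jmm ≠ jpp := by
    intro hh
    exact np_Sm_Sp (i0 - d0) (i0 + d0) 1
      (by rw [one_smul, ← hjmm, ← hjpp, hh])
  obtain ⟨inc2, G2⟩ := G1.addPoint (Pv N i0 (-d0)) jmm jpp hne_jmm_jpp
    (by rw [hjmm, dPSm]; push_cast; ring)
    (by rw [hjpp, dPSp]; push_cast; ring)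
    (by
      intro j hj
      rcases hLC j with hY | ⟨i'', hi'', hV⟩ | ⟨i'', hi'', hV⟩ | ⟨i'', hi'', hV⟩
      · rw [hY, dPY] at hj
        refine absurd (show d0 = 0 by exact_mod_cast neg_eq_zero.mp (by exact_mod_cast hj)) hd0
      · rw [hV, dPV] at hj
        exact absurd (int2_eq hj ▸ hi'') hiS
      · rw [hV, dPSp] at hj
        have h1 : i0 - (-d0) = i'' := int3_eq hj
        rw [sub_neg_eq_add] at h1
        exact Or.inr (G.linj (by rw [hV, ← h1, hjpp]))
      · rw [hV, dPSm] at hj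
        have h1 : i0 + (-d0) = i'' := int3_eq' hj
        rw [← sub_eq_add_neg] at h1
        exact Or.inl (G.linj (by rw [hV, ← h1, hjmm])))
    (by
      intro idx c
      refine Fin.lastCases ?_ (fun idx' => ?_) idx
      · rw [hp1, Fin.snoc_last]
        exact np_P_P (Or.inr (fun hh => hd0 (by omega))) c
      · rw [hp1, Fin.snoc_castSucc]
        rcases hPC idx' with hP | hP | ⟨i, d, hP, hdc⟩
        · rw [hP]; exact np_P_E1 i0 (-d0) c
        · rw [hP]; exact np_P_Em1 i0 (-d0) c
        · rw [hP]; exact np_P_P (Or.inl (fun hh => (hPfact i d hdc).1 hh.symm)) c)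
    (nzP i0 (-d0))
  set p2 : Fin (np + 2) → Fin 3 → ℝ := Fin.snoc p1 (Pv N i0 (-d0)) with hp2
  -- ===== Move 3 : add the vertical line V = Vv i0 =====
  obtain ⟨inc3, G3⟩ := G2.addLine (Vv N i0)
    (Fin.castSucc (Fin.last np)) (Fin.last (np + 1))
    (Fin.castSucc_lt_last _).ne
    (by rw [hp2, Fin.snoc_castSucc, hp1, Fin.snoc_last, dPV]; push_cast; ring)
    (by rw [hp2, Fin.snoc_last, dPV]; push_cast; ring)
    (by
      intro idx
      refine Fin.lastCases ?_ (fun idx' => ?_) idx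
      · intro _; exact Or.inr rfl
      · refine Fin.lastCases ?_ (fun idx'' => ?_) idx'
        · intro _; exact Or.inl rfl
        · rw [hp2, Fin.snoc_castSucc, hp1, Fin.snoc_castSucc]
          intro hdot
          exfalso
          rcases hPC idx'' with hP | hP | ⟨i, d, hP, hdc⟩
          · rw [hP, dE1V] at hdot; exact q_ne N hdot
          · rw [hP, dEm1V] at hdot; exact q_ne N hdot
          · rw [hP, dPV] at hdot
            exact (hPfact i d hdc).1 (int2_eq hdot))
    (by
      intro j c
      rcases hLC j with hY | ⟨i'', hi'', hV⟩ | ⟨i'', hi'', hV⟩ | ⟨i'', hi'', hV⟩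
      · rw [hY]; exact np_V_Y i0 c
      · rw [hV]; exact np_V_V (fun hh => hiS (by rw [hh]; exact hi'')) c
      · rw [hV]; exact np_V_Sp i0 i'' c
      · rw [hV]; exact np_V_Sm i0 i'' c)
    (nzV i0)
  set l1 : Fin (nl + 1) → Fin 3 → ℝ := Fin.snoc l (Vv N i0) with hl1
  -- ===== Move 4 : add the point A = Pv i0 0 =====
  obtain ⟨inc4, G4⟩ := G3.addPoint (Pv N i0 0)
    (Fin.last nl) (Fin.castSucc jY)
    (Fin.castSucc_lt_last jY).ne'
    (by rw [hl1, Fin.snoc_last, dPV]; push_cast; ring)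
    (by rw [hl1, Fin.snoc_castSucc, hjY, dPY]; push_cast; ring)
    (by
      intro j
      refine Fin.lastCases ?_ (fun j' => ?_) j
      · intro _; exact Or.inl rfl
      · rw [hl1, Fin.snoc_castSucc]
        intro hdot
        rcases hLC j' with hY | ⟨i'', hi'', hV⟩ | ⟨i'', hi'', hV⟩ | ⟨i'', hi'', hV⟩
      
        · refine Or.inr ?_
          have : j' = jY := G.linj (by rw [hY, hjY])
          rw [this]
        · exfalso
          rw [hV, dPV] at hdot
          exact hiS (int2_eq hdot ▸ hi'')
        · exfalso
          rw [hV, dPSp] at hdot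
          have h1 : i0 - 0 = i'' := int3_eq hdot
          rw [sub_zero] at h1
          exact hiE (h1 ▸ hi'')
        · exfalso
          rw [hV, dPSm] at hdot
          have h1 : i0 + 0 = i'' := int3_eq' hdot
          rw [add_zero] at h1
          exact hiE (h1 ▸ hi''))
    (by
      intro idx c
      refine Fin.lastCases ?_ (fun idx' => ?_) idx
      · rw [hp2, Fin.snoc_last]
        exact np_P_P (Or.inr (fun hh => hd0 (by omega))) c
      · rw [hp2, Fin.snoc_castSucc]
        refine Fin.lastCases ?_ (fun idx'' => ?_) idx'
        · rw [hp1, Fin.snoc_last]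
          exact np_P_P (Or.inr (fun hh => hd0 (by omega))) c
        · rw [hp1, Fin.snoc_castSucc]
          rcases hPC idx'' with hP | hP | ⟨i, d, hP, hdc⟩
          · rw [hP]; exact np_P_E1 i0 0 c
          · rw [hP]; exact np_P_Em1 i0 0 c
          · rw [hP]; exact np_P_P (Or.inl (fun hh => (hPfact i d hdc).1 hh.symm)) c)
    (nzP i0 0)
  set p3 : Fin (np + 3) → Fin 3 → ℝ := Fin.snoc p2 (Pv N i0 0) with hp3
  -- ===== Move 5 : add the slanted line S⁺ = Spv i0 =====
  obtain ⟨inc5, G5⟩ := G4.addLine (Spv N i0)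
    (Fin.last (np + 2)) (Fin.castSucc (Fin.castSucc (Fin.castSucc iE1)))
    (Fin.castSucc_lt_last _).ne'
    (by rw [hp3, Fin.snoc_last, dPSp]; push_cast; ring)
    (by
      rw [hp3, Fin.snoc_castSucc, hp2, Fin.snoc_castSucc, hp1, Fin.snoc_castSucc, hiE1]
      exact dE1Sp i0)
    (by
      intro idx
      refine Fin.lastCases ?_ (fun idx' => ?_) idx
      · intro _; exact Or.inl rfl
      · rw [hp3, Fin.snoc_castSucc]
        refine Fin.lastCases ?_ (fun idx'' => ?_) idx'
        · rw [hp2, Fin.snoc_last]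
          intro hdot
          exfalso
          rw [dPSp] at hdot
          have h1 : i0 - (-d0) = i0 := int3_eq hdot
          omega
        · rw [hp2, Fin.snoc_castSucc]
          refine Fin.lastCases ?_ (fun idx''' => ?_) idx''
          · rw [hp1, Fin.snoc_last]
            intro hdot
            exfalso
            rw [dPSp] at hdot
            have h1 : i0 - d0 = i0 := int3_eq hdot
            omega
          · rw [hp1, Fin.snoc_castSucc]
            intro hdot
            rcases hPC idx''' with hP | hP | ⟨i, d, hP, hdc⟩
            · refine Or.inr ?_
              have : idx''' = iE1 := G.pinj (by rw [hP, hiE1])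
              rw [this]
            · exfalso
              rw [hP, dEm1Sp] at hdot
              exact twoN_ne_zero' N hdot
            · exfalso
              rw [hP, dPSp] at hdot
              exact (hPfact i d hdc).2.1 (int3_eq hdot))
    (by
      intro j c
      refine Fin.lastCases ?_ (fun j' => ?_) j
      · rw [hl1, Fin.snoc_last]; exact np_Sp_V i0 i0 c
      · rw [hl1, Fin.snoc_castSucc]
        rcases hLC j' with hY | ⟨i'', hi'', hV⟩ | ⟨i'', hi'', hV⟩ | ⟨i'', hi'', hV⟩
        · rw [hY]; exact np_Sp_Y i0 c
        · rw [hV]; exact np_Sp_V i0 i'' c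
        · rw [hV]; exact np_Sp_Sp (fun hh => hiE (by rw [hh]; exact hi'')) c
        · rw [hV]; exact np_Sp_Sm i0 i'' c)
    (nzSp i0)
  set l2 : Fin (nl + 2) → Fin 3 → ℝ := Fin.snoc l1 (Spv N i0) with hl2
  -- ===== Move 6 : add the slanted line S⁻ = Smv i0 =====
  obtain ⟨inc6, G6⟩ := G5.addLine (Smv N i0)
    (Fin.last (np + 2)) (Fin.castSucc (Fin.castSucc (Fin.castSucc iEm1)))
    (Fin.castSucc_lt_last _).ne'
    (by rw [hp3, Fin.snoc_last, dPSm]; push_cast; ring)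
    (by
      rw [hp3, Fin.snoc_castSucc, hp2, Fin.snoc_castSucc, hp1, Fin.snoc_castSucc, hiEm1]
      exact dEm1Sm i0)
    (by
      intro idx
      refine Fin.lastCases ?_ (fun idx' => ?_) idx
      · intro _; exact Or.inl rfl
      · rw [hp3, Fin.snoc_castSucc]
        refine Fin.lastCases ?_ (fun idx'' => ?_) idx'
        · rw [hp2, Fin.snoc_last]
          intro hdot
          exfalso
          rw [dPSm] at hdot
          have h1 : i0 + (-d0) = i0 := int3_eq' hdot
          omega
        · rw [hp2, Fin.snoc_castSucc]
          refine Fin.lastCases ?_ (fun idx''' => ?_) idx''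
          · rw [hp1, Fin.snoc_last]
            intro hdot
            exfalso
            rw [dPSm] at hdot
            have h1 : i0 + d0 = i0 := int3_eq' hdot
            omega
          · rw [hp1, Fin.snoc_castSucc]
            intro hdot
            rcases hPC idx''' with hP | hP | ⟨i, d, hP, hdc⟩
            · exfalso
              rw [hP, dE1Sm] at hdot
              exact twoN_ne_zero' N hdot
            · refine Or.inr ?_
              have : idx''' = iEm1 := G.pinj (by rw [hP, hiEm1])
              rw [this]
            · exfalso
              rw [hP, dPSm] at hdot
              exact (hPfact i d hdc).2.2 (int3_eq' hdot))
    (by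
      intro j c
      refine Fin.lastCases ?_ (fun j' => ?_) j
      · rw [hl2, Fin.snoc_last]; exact np_Sm_Sp i0 i0 c
      · rw [hl2, Fin.snoc_castSucc]
        refine Fin.lastCases ?_ (fun j'' => ?_) j'
        · rw [hl1, Fin.snoc_last]; exact np_Sm_V i0 i0 c
        · rw [hl1, Fin.snoc_castSucc]
          rcases hLC j'' with hY | ⟨i'', hi'', hV⟩ | ⟨i'', hi'', hV⟩ | ⟨i'', hi'', hV⟩
          · rw [hY]; exact np_Sm_Y i0 c
          · rw [hV]; exact np_Sm_V i0 i'' c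
          · rw [hV]; exact np_Sm_Sp i0 i'' c
          · rw [hV]; exact np_Sm_Sm (fun hh => hiE (by rw [hh]; exact hi'')) c)
    (nzSm i0)
  set l3 : Fin (nl + 3) → Fin 3 → ℝ := Fin.snoc l2 (Smv N i0) with hl3
  -- ===== Assembly =====
  have hsub : S ⊆ insert i0 S := Finset.subset_insert i0 S
  have hself : i0 ∈ insert i0 S := Finset.mem_insert_self i0 S
  refine ⟨np + 3, nl + 3, e + 12, p3, l3, inc6, G6, ?_, ?_, ?_, ?_⟩
  · -- PtsChar
    intro idx
    refine Fin.lastCases ?_ (fun idx' => ?_) idx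
    · rw [hp3, Fin.snoc_last]
      exact Or.inr (Or.inr ⟨i0, 0, rfl, Or.inl ⟨rfl, Or.inl hself⟩⟩)
    · rw [hp3, Fin.snoc_castSucc]
      refine Fin.lastCases ?_ (fun idx'' => ?_) idx'
      · rw [hp2, Fin.snoc_last]
        refine Or.inr (Or.inr ⟨i0, -d0, rfl, Or.inr ⟨neg_ne_zero.mpr hd0, hself, ?_, ?_⟩⟩)
        · rw [sub_neg_eq_add]; exact inE_mono hsub hp
        · rw [← sub_eq_add_neg]; exact inE_mono hsub hm
      · rw [hp2, Fin.snoc_castSucc]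
        refine Fin.lastCases ?_ (fun idx''' => ?_) idx''
        · rw [hp1, Fin.snoc_last]
          exact Or.inr (Or.inr ⟨i0, d0, rfl,
            Or.inr ⟨hd0, hself, inE_mono hsub hm, inE_mono hsub hp⟩⟩)
        · rw [hp1, Fin.snoc_castSucc]
          rcases hPC idx''' with hP | hP | ⟨i, d, hP, hdc⟩
          · exact Or.inl hP
          · exact Or.inr (Or.inl hP)
          · refine Or.inr (Or.inr ⟨i, d, hP, ?_⟩)
            rcases hdc with ⟨h1, h2⟩ | ⟨h1, h2, h3, h4⟩
            · exact Or.inl ⟨h1, inE_mono hsub h2⟩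
            · exact Or.inr ⟨h1, hsub h2, inE_mono hsub h3, inE_mono hsub h4⟩
  · -- LnsChar
    intro jdx
    refine Fin.lastCases ?_ (fun j' => ?_) jdx
    · rw [hl3, Fin.snoc_last]
      exact Or.inr (Or.inr (Or.inr ⟨i0, Or.inl hself, rfl⟩))
    · rw [hl3, Fin.snoc_castSucc]
      refine Fin.lastCases ?_ (fun j'' => ?_) j'
      · rw [hl2, Fin.snoc_last]
        exact Or.inr (Or.inr (Or.inl ⟨i0, Or.inl hself, rfl⟩))
      · rw [hl2, Fin.snoc_castSucc]
        refine Fin.lastCases ?_ (fun j''' => ?_) j''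
        · rw [hl1, Fin.snoc_last]
          exact Or.inr (Or.inl ⟨i0, hself, rfl⟩)
        · rw [hl1, Fin.snoc_castSucc]
          rcases hLC j''' with hY | ⟨i'', hi'', hV⟩ | ⟨i'', hi'', hV⟩ | ⟨i'', hi'', hV⟩
          · exact Or.inl hY
          · exact Or.inr (Or.inl ⟨i'', hsub hi'', hV⟩)
          · exact Or.inr (Or.inr (Or.inl ⟨i'', inE_mono hsub hi'', hV⟩))
          · exact Or.inr (Or.inr (Or.inr ⟨i'', inE_mono hsub hi'', hV⟩))
  · -- PtsCompl
    constructor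
    · refine ⟨Fin.castSucc (Fin.castSucc (Fin.castSucc iE1)), ?_⟩
      rw [hp3, Fin.snoc_castSucc, hp2, Fin.snoc_castSucc, hp1, Fin.snoc_castSucc, hiE1]
    · refine ⟨Fin.castSucc (Fin.castSucc (Fin.castSucc iEm1)), ?_⟩
      rw [hp3, Fin.snoc_castSucc, hp2, Fin.snoc_castSucc, hp1, Fin.snoc_castSucc, hiEm1]
  · -- LnsCompl
    constructor
    · refine ⟨Fin.castSucc (Fin.castSucc (Fin.castSucc jY)), ?_⟩
      rw [hl3, Fin.snoc_castSucc, hl2, Fin.snoc_castSucc, hl1, Fin.snoc_castSucc, hjY]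
    · intro i hi
      rcases hi with hi | hi | hi
      · rcases Finset.mem_insert.mp hi with rfl | hi
        · constructor
          · refine ⟨Fin.castSucc (Fin.last (nl + 1)), ?_⟩
            rw [hl3, Fin.snoc_castSucc, hl2, Fin.snoc_last]
          · exact ⟨Fin.last (nl + 2), by rw [hl3, Fin.snoc_last]⟩
        · obtain ⟨⟨ja, hja⟩, ⟨jb, hjb⟩⟩ := hSS i (Or.inl hi)
          constructor
          · refine ⟨Fin.castSucc (Fin.castSucc (Fin.castSucc ja)), ?_⟩
            rw [hl3, Fin.snoc_castSucc, hl2, Fin.snoc_castSucc, hl1, Fin.snoc_castSucc, hja]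
          · refine ⟨Fin.castSucc (Fin.castSucc (Fin.castSucc jb)), ?_⟩
            rw [hl3, Fin.snoc_castSucc, hl2, Fin.snoc_castSucc, hl1, Fin.snoc_castSucc, hjb]
      · obtain ⟨⟨ja, hja⟩, ⟨jb, hjb⟩⟩ := hSS i (Or.inr (Or.inl hi))
        constructor
        · refine ⟨Fin.castSucc (Fin.castSucc (Fin.castSucc ja)), ?_⟩
          rw [hl3, Fin.snoc_castSucc, hl2, Fin.snoc_castSucc, hl1, Fin.snoc_castSucc, hja]
        · refine ⟨Fin.castSucc (Fin.castSucc (Fin.castSucc jb)), ?_⟩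
          rw [hl3, Fin.snoc_castSucc, hl2, Fin.snoc_castSucc, hl1, Fin.snoc_castSucc, hjb]
      · obtain ⟨⟨ja, hja⟩, ⟨jb, hjb⟩⟩ := hSS i (Or.inr (Or.inr hi))
        constructor
        · refine ⟨Fin.castSucc (Fin.castSucc (Fin.castSucc ja)), ?_⟩
          rw [hl3, Fin.snoc_castSucc, hl2, Fin.snoc_castSucc, hl1, Fin.snoc_castSucc, hja]
        · refine ⟨Fin.castSucc (Fin.castSucc (Fin.castSucc jb)), ?_⟩
          rw [hl3, Fin.snoc_castSucc, hl2, Fin.snoc_castSucc, hl1, Fin.snoc_castSucc, hjb]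

theorem InvS.empty (N : ℕ) : InvS N ∅ := by
  classical
  have hBpos : (0:ℤ) < 2^(N+3) := by positivity
  have hBne : (-(2^(N+3)) : ℤ) ≠ 2^(N+3) := by omega
  have hBne' : (2^(N+3) : ℤ) ≠ -(2^(N+3)) := by omega
  set p0 : Fin 4 → Fin 3 → ℝ :=
    ![E1, Em1, Pv N (-(2^(N+3))) 0, Pv N (2^(N+3)) 0] with hp0
  have e0 : p0 0 = E1 := rfl
  have e1 : p0 1 = Em1 := rfl
  have e2 : p0 2 = Pv N (-(2^(N+3))) 0 := rfl
  have e3 : p0 3 = Pv N (2^(N+3)) 0 := rfl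
  have G0 : Good 4 0 0 p0 Fin.elim0 Fin.elim0 := by
    refine Good.base p0 ?_ ?_
    · intro i
      fin_cases i
      · exact nzE1
      · exact nzEm1
      · exact nzP _ _
      · exact nzP _ _
    · intro i i' hne c
      fin_cases i <;> fin_cases i' <;>
        first
          | exact absurd rfl hne
          | exact np_E1_Em1 c
          | exact np_Em1_E1 c
          | exact np_E1_P _ _ c
          | exact np_Em1_P _ _ c
          | exact np_P_E1 _ _ c
          | exact np_P_Em1 _ _ c
          | exact np_P_P (Or.inl hBne) c
          | exact np_P_P (Or.inl hBne') c
  -- line 1 : Y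
  obtain ⟨inc1, G1⟩ := G0.addLine Yv 2 3 (by decide)
    (by rw [e2, dPY]; norm_num)
    (by rw [e3, dPY]; norm_num)
    (by
      intro i hi
      fin_cases i
      · exfalso; have hi' : E1 ⬝ᵥ Yv = 0 := hi; rw [dE1Y] at hi'; exact one_ne_zero hi'
      · exfalso; have hi' : Em1 ⬝ᵥ Yv = 0 := hi; rw [dEm1Y] at hi'; norm_num at hi'
      · exact Or.inl rfl
      · exact Or.inr rfl)
    (fun j => j.elim0)
    nzY
  set L1 : Fin 1 → Fin 3 → ℝ := Fin.snoc Fin.elim0 Yv with hL1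
  -- line 2 : Sp (-B)
  obtain ⟨inc2, G2⟩ := G1.addLine (Spv N (-(2^(N+3)))) 2 0 (by decide)
    (by rw [e2, dPSp]; push_cast; ring)
    (by rw [e0]; exact dE1Sp _)
    (by
      intro i hi
      fin_cases i
      · exact Or.inr rfl
      · exfalso; have hi' : Em1 ⬝ᵥ Spv N (-(2^(N+3))) = 0 := hi
        rw [dEm1Sp] at hi'; exact twoN_ne_zero' N hi'
      · exact Or.inl rfl
      · exfalso
        have hi' : Pv N (2^(N+3)) 0 ⬝ᵥ Spv N (-(2^(N+3))) = 0 := hi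
        rw [dPSp] at hi'
        have h1 : 2^(N+3) - 0 = -(2^(N+3) : ℤ) := int3_eq hi'
        omega)
    (by
      intro j c
      refine Fin.lastCases ?_ (fun j' => j'.elim0) j
      rw [hL1, Fin.snoc_last]
      exact np_Sp_Y _ c)
    (nzSp _)
  set L2 : Fin 2 → Fin 3 → ℝ := Fin.snoc L1 (Spv N (-(2^(N+3)))) with hL2
  -- line 3 : Sm (-B)
  obtain ⟨inc3, G3⟩ := G2.addLine (Smv N (-(2^(N+3)))) 2 1 (by decide)
    (by rw [e2, dPSm]; push_cast; ring)
    (by rw [e1]; exact dEm1Sm _)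
    (by
      intro i hi
      fin_cases i
      · exfalso; have hi' : E1 ⬝ᵥ Smv N (-(2^(N+3))) = 0 := hi
        rw [dE1Sm] at hi'; exact twoN_ne_zero' N hi'
      · exact Or.inr rfl
      · exact Or.inl rfl
      · exfalso
        have hi' : Pv N (2^(N+3)) 0 ⬝ᵥ Smv N (-(2^(N+3))) = 0 := hi
        rw [dPSm] at hi'
        have h1 : 2^(N+3) + 0 = -(2^(N+3) : ℤ) := int3_eq' hi'
        omega)
    (by
      intro j c
      refine Fin.lastCases ?_ (fun j' => ?_) j
      · rw [hL2, Fin.snoc_last]; exact np_Sm_Sp _ _ c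
      · refine Fin.lastCases ?_ (fun j'' => j''.elim0) j'
        rw [hL2, Fin.snoc_castSucc, hL1, Fin.snoc_last]
        exact np_Sm_Y _ c)
    (nzSm _)
  set L3 : Fin 3 → Fin 3 → ℝ := Fin.snoc L2 (Smv N (-(2^(N+3)))) with hL3
  -- line 4 : Sp B
  obtain ⟨inc4, G4⟩ := G3.addLine (Spv N (2^(N+3))) 3 0 (by decide)
    (by rw [e3, dPSp]; push_cast; ring)
    (by rw [e0]; exact dE1Sp _)
    (by
      intro i hi
      fin_cases i
      · exact Or.inr rfl
      · exfalso; have hi' : Em1 ⬝ᵥ Spv N (2^(N+3)) = 0 := hi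
        rw [dEm1Sp] at hi'; exact twoN_ne_zero' N hi'
      · exfalso
        have hi' : Pv N (-(2^(N+3))) 0 ⬝ᵥ Spv N (2^(N+3)) = 0 := hi
        rw [dPSp] at hi'
        have h1 : -(2^(N+3)) - 0 = (2^(N+3) : ℤ) := int3_eq hi'
        omega
      · exact Or.inl rfl)
    (by
      intro j c
      refine Fin.lastCases ?_ (fun j' => ?_) j
      · rw [hL3, Fin.snoc_last]; exact np_Sp_Sm _ _ c
      · refine Fin.lastCases ?_ (fun j'' => ?_) j'
        · rw [hL3, Fin.snoc_castSucc, hL2, Fin.snoc_last]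
          exact np_Sp_Sp hBne' c
        · refine Fin.lastCases ?_ (fun j''' => j'''.elim0) j''
          rw [hL3, Fin.snoc_castSucc, hL2, Fin.snoc_castSucc, hL1, Fin.snoc_last]
          exact np_Sp_Y _ c)
    (nzSp _)
  set L4 : Fin 4 → Fin 3 → ℝ := Fin.snoc L3 (Spv N (2^(N+3))) with hL4
  -- line 5 : Sm B
  obtain ⟨inc5, G5⟩ := G4.addLine (Smv N (2^(N+3))) 3 1 (by decide)
    (by rw [e3, dPSm]; push_cast; ring)
    (by rw [e1]; exact dEm1Sm _)
    (by
      intro i hi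
      fin_cases i
      · exfalso; have hi' : E1 ⬝ᵥ Smv N (2^(N+3)) = 0 := hi
        rw [dE1Sm] at hi'; exact twoN_ne_zero' N hi'
      · exact Or.inr rfl
      · exfalso
        have hi' : Pv N (-(2^(N+3))) 0 ⬝ᵥ Smv N (2^(N+3)) = 0 := hi
        rw [dPSm] at hi'
        have h1 : -(2^(N+3)) + 0 = (2^(N+3) : ℤ) := int3_eq' hi'
        omega
      · exact Or.inl rfl)
    (by
      intro j c
      refine Fin.lastCases ?_ (fun j' => ?_) j
      · rw [hL4, Fin.snoc_last]; exact np_Sm_Sp _ _ c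
      · refine Fin.lastCases ?_ (fun j'' => ?_) j'
        · rw [hL4, Fin.snoc_castSucc, hL3, Fin.snoc_last]
          exact np_Sm_Sm hBne' c
        · refine Fin.lastCases ?_ (fun j''' => ?_) j''
          · rw [hL4, Fin.snoc_castSucc, hL3, Fin.snoc_castSucc, hL2, Fin.snoc_last]
            exact np_Sm_Sp _ _ c
          · refine Fin.lastCases ?_ (fun j'''' => j''''.elim0) j'''
            rw [hL4, Fin.snoc_castSucc, hL3, Fin.snoc_castSucc, hL2, Fin.snoc_castSucc,
              hL1, Fin.snoc_last]
            exact np_Sm_Y _ c)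
    (nzSm _)
  set L5 : Fin 5 → Fin 3 → ℝ := Fin.snoc L4 (Smv N (2^(N+3))) with hL5
  -- assemble
  refine ⟨4, 5, 10, p0, L5, inc5, G5, ?_, ?_, ?_, ?_⟩
  · intro idx
    fin_cases idx
    · exact Or.inl rfl
    · exact Or.inr (Or.inl rfl)
    · exact Or.inr (Or.inr ⟨_, 0, rfl, Or.inl ⟨rfl, Or.inr (Or.inr rfl)⟩⟩)
    · exact Or.inr (Or.inr ⟨_, 0, rfl, Or.inl ⟨rfl, Or.inr (Or.inl rfl)⟩⟩)
  · intro jdx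
    refine Fin.lastCases ?_ (fun j1 => ?_) jdx
    · rw [hL5, Fin.snoc_last]
      exact Or.inr (Or.inr (Or.inr ⟨_, Or.inr (Or.inl rfl), rfl⟩))
    · rw [hL5, Fin.snoc_castSucc]
      refine Fin.lastCases ?_ (fun j2 => ?_) j1
      · rw [hL4, Fin.snoc_last]
        exact Or.inr (Or.inr (Or.inl ⟨_, Or.inr (Or.inl rfl), rfl⟩))
      · rw [hL4, Fin.snoc_castSucc]
        refine Fin.lastCases ?_ (fun j3 => ?_) j2
        · rw [hL3, Fin.snoc_last]
          exact Or.inr (Or.inr (Or.inr ⟨_, Or.inr (Or.inr rfl), rfl⟩))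
        · rw [hL3, Fin.snoc_castSucc]
          refine Fin.lastCases ?_ (fun j4 => ?_) j3
          · rw [hL2, Fin.snoc_last]
            exact Or.inr (Or.inr (Or.inl ⟨_, Or.inr (Or.inr rfl), rfl⟩))
          · refine Fin.lastCases ?_ (fun j5 => j5.elim0) j4
            rw [hL2, Fin.snoc_castSucc, hL1, Fin.snoc_last]
            exact Or.inl rfl
  · exact ⟨⟨0, rfl⟩, ⟨1, rfl⟩⟩
  · constructor
    · refine ⟨(Fin.castSucc (Fin.castSucc (Fin.castSucc (Fin.castSucc (Fin.last 0))))), ?_⟩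
      rw [hL5, Fin.snoc_castSucc, hL4, Fin.snoc_castSucc, hL3, Fin.snoc_castSucc,
        hL2, Fin.snoc_castSucc, hL1, Fin.snoc_last]
    · rintro i (hi | rfl | rfl)
      · exact absurd hi (Finset.notMem_empty i)
      · constructor
        · refine ⟨Fin.castSucc (Fin.last 3), ?_⟩
          rw [hL5, Fin.snoc_castSucc, hL4, Fin.snoc_last]
        · exact ⟨Fin.last 4, by rw [hL5, Fin.snoc_last]⟩
      · constructor
        · refine ⟨Fin.castSucc (Fin.castSucc (Fin.castSucc (Fin.last 1))), ?_⟩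
          rw [hL5, Fin.snoc_castSucc, hL4, Fin.snoc_castSucc, hL3, Fin.snoc_castSucc,
            hL2, Fin.snoc_last]
        · refine ⟨Fin.castSucc (Fin.castSucc (Fin.last 2)), ?_⟩
          rw [hL5, Fin.snoc_castSucc, hL4, Fin.snoc_castSucc, hL3, Fin.snoc_last]

noncomputable def Mv (N : ℕ) (v : ℕ) : Finset ℤ :=
  (Finset.Ioo (-(2^(N+3)) : ℤ) (2^(N+3))).filter (fun i => (2^v : ℤ) ∣ i)

lemma mem_Mv {N v : ℕ} {i : ℤ} :
    i ∈ Mv N v ↔ (-(2^(N+3)) < i ∧ i < 2^(N+3)) ∧ (2^v : ℤ) ∣ i := by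
  simp [Mv, Finset.mem_filter, Finset.mem_Ioo, and_assoc]

lemma dvd_shift {v : ℕ} {a : ℤ} (h1 : (2^v:ℤ) ∣ a) (h2 : ¬(2^(v+1):ℤ) ∣ a) :
    (2^(v+1):ℤ) ∣ (a - 2^v) ∧ (2^(v+1):ℤ) ∣ (a + 2^v) := by
  obtain ⟨q, rfl⟩ := h1
  rcases Int.even_or_odd q with ⟨k, rfl⟩ | ⟨k, rfl⟩
  · exact absurd ⟨k, by rw [pow_succ]; ring⟩ h2
  · constructor
    · exact ⟨k, by rw [pow_succ]; ring⟩
    · exact ⟨k + 1, by rw [pow_succ]; ring⟩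

lemma abs_le_sub_of_dvd {a B g : ℤ} (hg : 0 < g) (h1 : g ∣ a) (h2 : g ∣ B)
    (h3 : -B < a) (h4 : a < B) : -(B - g) ≤ a ∧ a ≤ B - g := by
  have hd : g ∣ (B - a) := dvd_sub h2 h1
  have hd' : g ∣ (B + a) := dvd_add h2 h1
  have l1 : g ≤ B - a := Int.le_of_dvd (by omega) hd
  have l2 : g ≤ B + a := Int.le_of_dvd (by omega) hd'
  omega

theorem InvS.levelStep (N v : ℕ) (hv : v ≤ N + 3) (h : InvS N (Mv N (v+1))) :
    InvS N (Mv N v) := by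
  classical
  have hsub : Mv N (v+1) ⊆ Mv N v := by
    intro i hi
    rw [mem_Mv] at hi ⊢
    exact ⟨hi.1, dvd_trans (pow_dvd_pow 2 (by omega)) hi.2⟩
  have key : ∀ T : Finset ℤ, T ⊆ Mv N v \ Mv N (v+1) → InvS N (Mv N (v+1) ∪ T) := by
    intro T
    induction T using Finset.induction_on with
    | empty => intro _; simpa using h
    | @insert a T ha ih =>
      intro hsubT
      have haT : a ∈ Mv N v \ Mv N (v+1) :=
        hsubT (Finset.mem_insert_self a T)
      have hT : T ⊆ Mv N v \ Mv N (v+1) :=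
        fun x hx => hsubT (Finset.mem_insert_of_mem hx)
      have hInv := ih hT
      rw [Finset.union_insert]
      obtain ⟨haM, haM'⟩ := Finset.mem_sdiff.mp haT
      rw [mem_Mv] at haM
      obtain ⟨⟨hb1, hb2⟩, hdvd⟩ := haM
      have hnd : ¬ (2^(v+1) : ℤ) ∣ a := by
        intro hc
        exact haM' (mem_Mv.mpr ⟨⟨hb1, hb2⟩, hc⟩)
      have hgpos : (0:ℤ) < 2^v := by positivity
      have hgB : (2^v : ℤ) ∣ 2^(N+3) := pow_dvd_pow 2 (by omega)
      obtain ⟨hs1, hs2⟩ := dvd_shift hdvd hnd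
      obtain ⟨hr1, hr2⟩ := abs_le_sub_of_dvd hgpos hdvd hgB hb1 hb2
      -- endpoint membership
      have hend : ∀ b : ℤ, (2^(v+1):ℤ) ∣ b → -(2^(N+3)) ≤ b → b ≤ 2^(N+3) →
          inE N (Mv N (v+1) ∪ T) b := by
        intro b hdb hbl hbr
        rcases eq_or_lt_of_le hbr with rfl | hbr'
        · exact Or.inr (Or.inl rfl)
        rcases eq_or_lt_of_le hbl with hbl' | hbl'
        · exact Or.inr (Or.inr hbl'.symm)
        · exact Or.inl (Finset.mem_union_left _ (mem_Mv.mpr ⟨⟨hbl', hbr'⟩, hdb⟩))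
      refine hInv.node a (2^v) (by positivity) ?_ (by omega) (by omega) ?_ ?_
      · intro hc
        rcases Finset.mem_union.mp hc with hc | hc
        · exact haM' hc
        · exact ha hc
      · exact hend _ hs1 (by omega) (by omega)
      · exact hend _ hs2 (by omega) (by omega)
  have hfull := key (Mv N v \ Mv N (v+1)) (Finset.Subset.refl _)
  rwa [Finset.union_sdiff_of_subset hsub] at hfull

theorem InvS.all (N : ℕ) : InvS N (Mv N 0) := by
  have h0 : InvS N (Mv N (N+3)) := by
    have hpos : (0:ℤ) < 2^(N+3) := by positivity
    have h1 := (InvS.empty N).node 0 (2^(N+3)) (by omega)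
      (Finset.notMem_empty 0) (by omega) (by omega)
      (Or.inr (Or.inr (by ring)))
      (Or.inr (Or.inl (by ring)))
    have h2 : Mv N (N+3) = insert (0:ℤ) ∅ := by
      ext i
      rw [mem_Mv]
      simp only [Finset.mem_insert, Finset.notMem_empty, or_false]
      constructor
      · rintro ⟨⟨hb1, hb2⟩, hd⟩
        have := Int.le_of_dvd (a := (2:ℤ)^(N+3)) (b := i)
        rcases eq_or_ne i 0 with rfl | hne
        · rfl
        · exfalso
          have h3 : (2:ℤ)^(N+3) ≤ |i| :=
            Int.le_of_dvd (abs_pos.mpr hne) ((dvd_abs _ _).mpr hd)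
          rcases abs_cases i with ⟨he, _⟩ | ⟨he, _⟩ <;> omega
      · rintro rfl
        have hpos : (0:ℤ) < 2^(N+3) := by positivity
        exact ⟨⟨by omega, by omega⟩, dvd_zero _⟩
    rw [h2]
    exact h1
  have key : ∀ k : ℕ, k ≤ N + 3 → InvS N (Mv N (N + 3 - k)) := by
    intro k
    induction k with
    | zero => intro _; simpa using h0
    | succ k ih =>
      intro hk
      have h1 := ih (by omega)
      have h2 : N + 3 - k = (N + 3 - (k+1)) + 1 := by omega
      rw [h2] at h1
      exact InvS.levelStep N (N + 3 - (k+1)) (by omega) h1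
  have := key (N+3) le_rfl
  simpa using this

end Construction
end IsoDG

open IsoDG

/-- for each `N` there is an incidence structure with a homogeneous
realization which records every geometric incidence, is independent, is
infinitesimally rigid (flex space of dimension `|P| + |L| + 8`), and covers the
dyadic grid of level `N` in the unit square: every point `(n/2^N, m/2^N)` with
`0 ≤ n, m ≤ 2^N` is a point of the configuration or lies on at least two of its
lines. -/
theorem isostatic_dyadic_grid (N : ℕ) :
    ∃ (np nl : ℕ) (I : Set (Fin np × Fin nl))
      (p : Fin np → Fin 3 → ℝ) (l : Fin nl → Fin 3 → ℝ),
      (∀ i, p i ≠ 0) ∧ (∀ j, l j ≠ 0) ∧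
      (∀ ij ∈ I, p ij.1 ⬝ᵥ l ij.2 = 0) ∧
      (∀ i i', i ≠ i' → ∀ c : ℝ, p i ≠ c • p i') ∧
      (∀ j j', j ≠ j' → ∀ c : ℝ, l j ≠ c • l j') ∧
      (∀ i j, p i ⬝ᵥ l j = 0 → (i, j) ∈ I) ∧
      (∀ ω : Fin np × Fin nl → ℝ, (∀ ij ∉ I, ω ij = 0) →
        (∀ j, ∑ i, ω (i, j) • p i = 0) → (∀ i, ∑ j, ω (i, j) • l j = 0) →
        ω = 0) ∧
      Module.finrank ℝ (homFlexSpace I p l) = np + nl + 8 ∧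
      (∀ n m : ℕ, n ≤ 2 ^ N → m ≤ 2 ^ N →
        (∃ (i : Fin np) (c : ℝ), c ≠ 0 ∧
          (![(n : ℝ), (m : ℝ), (2 ^ N : ℝ)] : Fin 3 → ℝ) = c • p i) ∨
        (∃ j j' : Fin nl, j ≠ j' ∧
          (![(n : ℝ), (m : ℝ), (2 ^ N : ℝ)] : Fin 3 → ℝ) ⬝ᵥ l j = 0 ∧
          (![(n : ℝ), (m : ℝ), (2 ^ N : ℝ)] : Fin 3 → ℝ) ⬝ᵥ l j' = 0)) := by
  obtain ⟨np, nl, e, p, l, inc, G, hPC, hLC, hPCo, hLCo⟩ := InvS.all N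
  refine ⟨np, nl, {ij | p ij.1 ⬝ᵥ l ij.2 = 0}, p, l,
    G.pnz, G.lnz, fun ij hij => hij, G.pnp, G.lnp, fun i j h => h, ?_, ?_, ?_⟩
  · intro ω hsupp hP hL
    exact G.stress_zero ω (fun ij hne => hsupp ij hne) hP hL
  · exact G.flex_finrank
  · intro n m hn hm
    have ht : (0:ℤ) < 2^N := by positivity
    have hn' : (n:ℤ) ≤ 2^N := by exact_mod_cast hn
    have hm' : (m:ℤ) ≤ 2^N := by exact_mod_cast hm
    have hn0 : (0:ℤ) ≤ (n:ℤ) := Int.natCast_nonneg n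
    have hm0 : (0:ℤ) ≤ (m:ℤ) := Int.natCast_nonneg m
    have hp2 : (2:ℤ)^(N+2) = 4 * 2^N := by rw [pow_add]; ring
    have hp3 : (2:ℤ)^(N+3) = 8 * 2^N := by rw [pow_add]; ring
    have hmem1 : ((n:ℤ) - m + 2^(N+2)) ∈ Mv N 0 := by
      rw [mem_Mv]
      refine ⟨⟨by omega, by omega⟩, by rw [pow_zero]; exact one_dvd _⟩
    have hmem2 : ((n:ℤ) + m - 2^(N+2)) ∈ Mv N 0 := by
      rw [mem_Mv]
      refine ⟨⟨by omega, by omega⟩, by rw [pow_zero]; exact one_dvd _⟩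
    obtain ⟨j, hj⟩ := (hLCo.2 ((n:ℤ) - m + 2^(N+2)) (Or.inl hmem1)).1
    obtain ⟨j', hj'⟩ := (hLCo.2 ((n:ℤ) + m - 2^(N+2)) (Or.inl hmem2)).2
    refine Or.inr ⟨j, j', ?_, ?_, ?_⟩
    · intro hh
      exact np_Sp_Sm _ _ 1 (by rw [one_smul, ← hj, ← hj', hh])
    · rw [hj]
      simp only [Spv, dotProduct, Fin.sum_univ_three, Matrix.cons_val_zero,
        Matrix.cons_val_one, Matrix.head_cons, Matrix.cons_val_two, Matrix.tail_cons]
      push_cast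
      ring
    · rw [hj']
      simp only [Smv, dotProduct, Fin.sum_univ_three, Matrix.cons_val_zero,
        Matrix.cons_val_one, Matrix.head_cons, Matrix.cons_val_two, Matrix.tail_cons]
      push_cast
      ring
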